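/- For positive integers r < m, the chromatic number of U(m,r) is strictly less than m. -/

import Mathlib

/-- Vertices of the universal graph U(m,r): pairs (i,A) with |A| = r-1 and i ∉ A. -/
def UVert (m r : ℕ) : Type :=
  {p : Fin m × Finset (Fin m) // p.2.card = r - 1 ∧ p.1 ∉ p.2}

instance (m r : ℕ) : Fintype (UVert m r) := Subtype.fintype _
instance (m r : ℕ) : DecidableEq (UVert m r) := Subtype.instDecidableEq

/-- The universal graph U(m,r): (i,A) ~ (j,B) iff i ∈ B and j ∈ A. -/
def Ugraph (m r : ℕ) : SimpleGraph (UVert m r) where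
  Adj x y := x.val.1 ∈ y.val.2 ∧ y.val.1 ∈ x.val.2
  symm := ⟨fun x y h => ⟨h.2, h.1⟩⟩
  loopless := ⟨fun x h => x.property.2 h.1⟩

instance (m r : ℕ) : DecidableRel (Ugraph m r).Adj :=
  fun _ _ => inferInstanceAs (Decidable (_ ∧ _))

lemma exists_good (m r : ℕ) (hr : 1 ≤ r) (hrm : r < m) (A : Finset (Fin m))
    (hA : A.card = r - 1) : ∃ k : Fin m, k.val < m - 1 ∧ k ∉ A := by
  have hm : 2 ≤ m := by omega
  have hcard : 1 < Aᶜ.card := by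
    have := Finset.card_compl A
    have : Aᶜ.card = m - (r - 1) := by
      rw [Finset.card_compl, hA, Fintype.card_fin]
    omega
  obtain ⟨a, ha, b, hb, hab⟩ := Finset.one_lt_card.mp hcard
  rcases Nat.lt_or_ge a.val (m - 1) with h | h
  · exact ⟨a, h, Finset.mem_compl.mp ha⟩
  · refine ⟨b, ?_, Finset.mem_compl.mp hb⟩
    have ha2 : a.val = m - 1 := by have := a.isLt; omega
    have hb2 : b.val < m := b.isLt
    have : b.val ≠ m - 1 := fun hbv => hab (Fin.ext (by omega))
    omega

noncomputable def ucolor (m r : ℕ) (hr : 1 ≤ r) (hrm : r < m) (v : UVert m r) :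
    Fin (m - 1) :=
  if h : v.val.1.val < m - 1 then ⟨v.val.1.val, h⟩
  else
    ⟨(Classical.choose (exists_good m r hr hrm v.val.2 v.prop.1)).val,
      (Classical.choose_spec (exists_good m r hr hrm v.val.2 v.prop.1)).1⟩

/-- for 1 ≤ r < m, χ(U(m,r)) < m. -/
theorem stmt6 (m r : ℕ) (hr : 1 ≤ r) (hrm : r < m) :
    (Ugraph m r).chromaticNumber < (m : ℕ∞) := by
  have hvalid : ∀ v w : UVert m r, (Ugraph m r).Adj v w →
      ucolor m r hr hrm v ≠ ucolor m r hr hrm w := by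
    intro v w hadj heq
    obtain ⟨h1, h2⟩ := hadj
    unfold ucolor at heq
    by_cases hv : v.val.1.val < m - 1 <;> by_cases hw : w.val.1.val < m - 1 <;>
      simp [hv, hw] at heq
    · -- both colored by own index: v.1 = w.1, but v.1 ∈ w.2 and w.1 ∉ w.2
      have : v.val.1 = w.val.1 := Fin.ext heq
      exact w.prop.2 (this ▸ h1)
    · -- v normal, w special: v.1 = choose ∉ w.2 but v.1 ∈ w.2
      have hspec := (Classical.choose_spec (exists_good m r hr hrm w.val.2 w.prop.1)).2
      have : v.val.1 = Classical.choose (exists_good m r hr hrm w.val.2 w.prop.1) :=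
        Fin.ext heq
      exact hspec (this ▸ h1)
    · have hspec := (Classical.choose_spec (exists_good m r hr hrm v.val.2 v.prop.1)).2
      have : w.val.1 = Classical.choose (exists_good m r hr hrm v.val.2 v.prop.1) :=
        Fin.ext heq.symm
      exact hspec (this ▸ h2)
    · -- both special: v.1.val = w.1.val = m-1, so v.1 = w.1 ∈ w.2, contradiction
      have hv2 : v.val.1.val = m - 1 := by have := v.val.1.isLt; omega
      have hw2 : w.val.1.val = m - 1 := by have := w.val.1.isLt; omega
      have : v.val.1 = w.val.1 := Fin.ext (by omega)
      exact w.prop.2 (this ▸ h1)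
  let C : (Ugraph m r).Coloring (Fin (m - 1)) := SimpleGraph.Coloring.mk _ (fun {v w} h => hvalid v w h)
  have hcol : (Ugraph m r).Colorable (m - 1) := by
    simpa using C.colorable
  calc (Ugraph m r).chromaticNumber ≤ (m - 1 : ℕ) := hcol.chromaticNumber_le
    _ < (m : ℕ∞) := by exact_mod_cast Nat.sub_lt (by omega) one_pos
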